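/- Let Z ⊆ I × J with I = [n], J = [m], such that every row and every column of Z is nonempty. Let I^{≥2} (resp. J^{≥2}) be the rows (columns) containing at least two elements of Z, and I^{=1}, J^{=1} the rows (columns) containing exactly one element. Assume Z ∩ (I^{=1} × J^{=1}) = ∅ (no isolated elements). For i ∈ I^{≥2} let P_i = {j : (i,j) is the unique element of Z in column j}, and for j ∈ J^{≥2} let Q_j = {i : (i,j) is the unique element of Z in row i}, and let Z^{≥2} = Z ∩ (I^{≥2} × J^{≥2}). Given arbitrary functions p_i : {-1,1}^{P_i} → {-1,1} and q_j : {-1,1}^{Q_j} → {-1,1}, define: g_i(y) = ∏_{j:(i,j)∈Z^{≥2}} y_j · p_i(y|_{P_i}) for i ∈ I^{≥2}; g_i(y) = y_j for i ∈ I^{=1} with i ∈ Q_j; f_j(x) = ∏_{i:(i,j)∈Z^{≥2}} x_i · q_j(x|_{Q_j}) for j ∈ J^{≥2}; f_j(x) = x_i for j ∈ J^{=1} with j ∈ P_i; f_0(x) = ∏_{i∈I^{≥2}} x_i · ∏_{j∈J^{≥2}} q_j(x|_{Q_j}); g_0(y) = ∏_{j∈J^{≥2}} y_j · ∏_{i∈I^{≥2}}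 p_i(y|_{P_i}). Then f_0(g_1(z_{1·}),…,g_n(z_{n·})) = g_0(f_1(z_{·1}),…,f_m(z_{·m})) for all z ∈ {-1,1}^{n×m}, both sides equaling ∏_{(i,j)∈Z^{≥2}} z_{ij} · ∏_{i∈I^{≥2}} p_i(z|_{i,P_i}) · ∏_{j∈J^{≥2}} q_j(z|_{Q_j,j}). -/

import Mathlib

open Finset

/-- Number of elements of `Z` in row `i`. -/
def rowCount {n m : ℕ} (Z : Finset (Fin n × Fin m)) (i : Fin n) : ℕ :=
  (Z.filter (fun q => q.1 = i)).card

/-- Number of elements of `Z` in column `j`. -/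
def colCount {n m : ℕ} (Z : Finset (Fin n × Fin m)) (j : Fin m) : ℕ :=
  (Z.filter (fun q => q.2 = j)).card

/-- `P_i`: the columns `j` such that `(i,j)` is the unique element of `Z` in column `j`. -/
def Pset {n m : ℕ} (Z : Finset (Fin n × Fin m)) (i : Fin n) : Finset (Fin m) :=
  univ.filter (fun j => (i, j) ∈ Z ∧ colCount Z j = 1)

/-- `Q_j`: the rows `i` such that `(i,j)` is the unique element of `Z` in row `i`. -/
def Qset {n m : ℕ} (Z : Finset (Fin n × Fin m)) (j : Fin m) : Finset (Fin n) :=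
  univ.filter (fun i => (i, j) ∈ Z ∧ rowCount Z i = 1)

/-- Rows of `Z` containing at least two elements. -/
def Ige2 {n m : ℕ} (Z : Finset (Fin n × Fin m)) : Finset (Fin n) :=
  univ.filter (fun i => 2 ≤ rowCount Z i)

/-- Columns of `Z` containing at least two elements. -/
def Jge2 {n m : ℕ} (Z : Finset (Fin n × Fin m)) : Finset (Fin m) :=
  univ.filter (fun j => 2 ≤ colCount Z j)

/-- `Z^{≥2} = Z ∩ (I^{≥2} × J^{≥2})`. -/
def Zge2 {n m : ℕ} (Z : Finset (Fin n × Fin m)) : Finset (Fin n × Fin m) :=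
  Z.filter (fun p => 2 ≤ rowCount Z p.1 ∧ 2 ≤ colCount Z p.2)

/-- The XOR-like single-block solution with projections: given `Z`
with no empty rows/columns and no isolated elements, and arbitrary Boolean functions
`p_i`, `q_j`, the functions defined in the statement form a generalized polymorphism,
both sides equaling
`∏_{(i,j)∈Z^{≥2}} z_{ij} · ∏_{i∈I^{≥2}} p_i(z|_{i,P_i}) · ∏_{j∈J^{≥2}} q_j(z|_{Q_j,j})`. -/
theorem stmt_17 (n m : ℕ) (Z : Finset (Fin n × Fin m))
    (hrow : ∀ i : Fin n, ∃ j, (i, j) ∈ Z)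
    (hcol : ∀ j : Fin m, ∃ i, (i, j) ∈ Z)
    (hiso : ∀ pr ∈ Z, ¬(rowCount Z pr.1 = 1 ∧ colCount Z pr.2 = 1))
    (p : (i : Fin n) → ({j // j ∈ Pset Z i} → ℝ) → ℝ)
    (q : (j : Fin m) → ({i // i ∈ Qset Z j} → ℝ) → ℝ)
    (hpBool : ∀ (i : Fin n) (y : {j // j ∈ Pset Z i} → ℝ),
      (∀ j, y j = 1 ∨ y j = -1) → (p i y = 1 ∨ p i y = -1))
    (hqBool : ∀ (j : Fin m) (x : {i // i ∈ Qset Z j} → ℝ),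
      (∀ i, x i = 1 ∨ x i = -1) → (q j x = 1 ∨ q j x = -1))
    (g : Fin n → (Fin m → ℝ) → ℝ) (f : Fin m → (Fin n → ℝ) → ℝ)
    (f0 : (Fin n → ℝ) → ℝ) (g0 : (Fin m → ℝ) → ℝ)
    (hg2 : ∀ i : Fin n, 2 ≤ rowCount Z i → ∀ y : Fin m → ℝ,
      g i y = (∏ j ∈ univ.filter (fun j => (i, j) ∈ Zge2 Z), y j) *
        p i (fun j => y j.val))
    (hg1 : ∀ i : Fin n, rowCount Z i = 1 → ∀ j : Fin m, (i, j) ∈ Z →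
      ∀ y : Fin m → ℝ, g i y = y j)
    (hf2 : ∀ j : Fin m, 2 ≤ colCount Z j → ∀ x : Fin n → ℝ,
      f j x = (∏ i ∈ univ.filter (fun i => (i, j) ∈ Zge2 Z), x i) *
        q j (fun i => x i.val))
    (hf1 : ∀ j : Fin m, colCount Z j = 1 → ∀ i : Fin n, (i, j) ∈ Z →
      ∀ x : Fin n → ℝ, f j x = x i)
    (hf0 : ∀ x : Fin n → ℝ,
      f0 x = (∏ i ∈ Ige2 Z, x i) * ∏ j ∈ Jge2 Z, q j (fun i => x i.val))
    (hg0 : ∀ y : Fin m → ℝ,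
      g0 y = (∏ j ∈ Jge2 Z, y j) * ∏ i ∈ Ige2 Z, p i (fun j => y j.val)) :
    ∀ z : Fin n → Fin m → ℝ, (∀ i j, z i j = 1 ∨ z i j = -1) →
      f0 (fun i => g i (z i)) = g0 (fun j => f j (fun i => z i j)) ∧
      f0 (fun i => g i (z i)) =
        (∏ pr ∈ Zge2 Z, z pr.1 pr.2) *
          (∏ i ∈ Ige2 Z, p i (fun j => z i j.val)) *
          (∏ j ∈ Jge2 Z, q j (fun i => z i.val j)) := by
  intro z hz
  -- row decomposition of the product over Zge2
  have hrowdec : (∏ pr ∈ Zge2 Z, z pr.1 pr.2) =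
      ∏ i ∈ Ige2 Z, ∏ j ∈ univ.filter (fun j => (i, j) ∈ Zge2 Z), z i j := by
    apply Finset.prod_finset_product' (f := fun i j => z i j)
    intro pr
    simp only [Ige2, Zge2, mem_filter, mem_univ, true_and]
    constructor
    · rintro ⟨hZ, h1, h2⟩; exact ⟨h1, hZ, h1, h2⟩
    · rintro ⟨h1, hZ, _, h2⟩; exact ⟨hZ, h1, h2⟩
  -- column decomposition
  have hcoldec : (∏ pr ∈ Zge2 Z, z pr.1 pr.2) =
      ∏ j ∈ Jge2 Z, ∏ i ∈ univ.filter (fun i => (i, j) ∈ Zge2 Z), z i j := by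
    apply Finset.prod_finset_product_right' (f := fun i j => z i j)
    intro pr
    simp only [Jge2, Zge2, mem_filter, mem_univ, true_and]
    constructor
    · rintro ⟨hZ, h1, h2⟩; exact ⟨h2, hZ, h1, h2⟩
    · rintro ⟨h2, hZ, h1, _⟩; exact ⟨hZ, h1, h2⟩
  -- LHS equals canonical form
  have hL : f0 (fun i => g i (z i)) =
      (∏ pr ∈ Zge2 Z, z pr.1 pr.2) *
        (∏ i ∈ Ige2 Z, p i (fun j => z i j.val)) *
        (∏ j ∈ Jge2 Z, q j (fun i => z i.val j)) := by
    rw [hf0]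
    have h1 : (∏ i ∈ Ige2 Z, g i (z i)) =
        (∏ i ∈ Ige2 Z, ∏ j ∈ univ.filter (fun j => (i, j) ∈ Zge2 Z), z i j) *
          ∏ i ∈ Ige2 Z, p i (fun j => z i j.val) := by
      rw [← Finset.prod_mul_distrib]
      apply Finset.prod_congr rfl
      intro i hi
      simp only [Ige2, mem_filter, mem_univ, true_and] at hi
      exact hg2 i hi (z i)
    have h2 : ∀ j ∈ Jge2 Z,
        q j (fun i : {i // i ∈ Qset Z j} => g i.val (z i.val)) =
          q j (fun i => z i.val j) := by
      intro j _
      congr 1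
      funext i
      have hi := i.2
      simp only [Qset, mem_filter, mem_univ, true_and] at hi
      exact hg1 i.val hi.2 j hi.1 (z i.val)
    rw [h1, Finset.prod_congr rfl h2, ← hrowdec]
  refine ⟨?_, hL⟩
  -- RHS equals canonical form
  have hR : g0 (fun j => f j (fun i => z i j)) =
      (∏ pr ∈ Zge2 Z, z pr.1 pr.2) *
        (∏ i ∈ Ige2 Z, p i (fun j => z i j.val)) *
        (∏ j ∈ Jge2 Z, q j (fun i => z i.val j)) := by
    rw [hg0]
    have h1 : (∏ j ∈ Jge2 Z, f j (fun i => z i j)) =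
        (∏ j ∈ Jge2 Z, ∏ i ∈ univ.filter (fun i => (i, j) ∈ Zge2 Z), z i j) *
          ∏ j ∈ Jge2 Z, q j (fun i => z i.val j) := by
      rw [← Finset.prod_mul_distrib]
      apply Finset.prod_congr rfl
      intro j hj
      simp only [Jge2, mem_filter, mem_univ, true_and] at hj
      exact hf2 j hj (fun i => z i j)
    have h2 : ∀ i ∈ Ige2 Z,
        p i (fun j : {j // j ∈ Pset Z i} => f j.val (fun i' => z i' j.val)) =
          p i (fun j => z i j.val) := by
      intro i _
      congr 1
      funext j
      have hj := j.2
      simp only [Pset, mem_filter, mem_univ, true_and] at hj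
      exact hf1 j.val hj.2 i hj.1 (fun i' => z i' j.val)
    rw [h1, Finset.prod_congr rfl h2, ← hcoldec]
    ring
  rw [hL, hR]
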